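/- The gradient of the objective function f is block-coordinate-wise Lipschitz continuous with constants L_i = 4(|A_i| + |B_i|): for every i ∈ {1,…,n}, every configuration (x_1,…,x_n) and every y_i ∈ ℝ^d, ‖∇_i f(x_1,…,x_{i−1}, y_i, x_{i+1},…,x_n) − ∇_i f(x_1,…,x_{i−1}, x_i, x_{i+1},…,x_n)‖ ≤ 4(|A_i| + |B_i|) ‖y_i − x_i‖. -/

import Mathlib

open Finset Filter RealInnerProductSpace

set_option linter.unusedSectionVars false

noncomputable def obj {d n : ℕ} {J : Type*} (a : J → EuclideanSpace ℝ (Fin d))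
    (A : Fin n → Finset J) (dhat : Fin n → J → ℝ)
    (B : Fin n → Finset (Fin n)) (lhat : Fin n → Fin n → ℝ)
    (x : Fin n → EuclideanSpace ℝ (Fin d)) : ℝ :=
  (∑ i, ∑ j ∈ A i, max (‖x i - a j‖ - dhat i j) 0 ^ 2)
    + (1 / 2) * ∑ i, ∑ q ∈ B i, max (‖x i - x q‖ - lhat i q) 0 ^ 2

/-- Partial gradient of `f` with respect to the `i`-th block. -/
noncomputable def blockGrad {d n : ℕ} (f : (Fin n → EuclideanSpace ℝ (Fin d)) → ℝ)
    (i : Fin n) (x : Fin n → EuclideanSpace ℝ (Fin d)) : EuclideanSpace ℝ (Fin d) :=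
  gradient (fun y => f (Function.update x i y)) (x i)

section Helpers
variable {E : Type*} [NormedAddCommGroup E] [InnerProductSpace ℝ E] [CompleteSpace E]

noncomputable def sProj (r : ℝ) (v : E) : E := if ‖v‖ ≤ r then v else (r / ‖v‖) • v

noncomputable def sGrad (r : ℝ) (v : E) : E := (2:ℝ) • (v - sProj r v)

lemma norm_sProj_le {r : ℝ} (hr : 0 ≤ r) (v : E) : ‖sProj r v‖ ≤ r := by
  unfold sProj; split_ifs with h
  · exact h
  · push_neg at h
    have hv : 0 < ‖v‖ := lt_of_le_of_lt hr h
    rw [norm_smul, Real.norm_eq_abs, abs_of_nonneg (div_nonneg hr hv.le)]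
    rw [div_mul_cancel₀ _ hv.ne']

lemma maxpart_eq {r : ℝ} (hr : 0 ≤ r) (v : E) : max (‖v‖ - r) 0 = ‖v - sProj r v‖ := by
  unfold sProj; split_ifs with h
  · simp [max_eq_right (sub_nonpos.2 h)]
  · push_neg at h
    have hv : 0 < ‖v‖ := lt_of_le_of_lt hr h
    have h1 : v - (r / ‖v‖) • v = (1 - r / ‖v‖) • v := by
      rw [sub_smul, one_smul]
    have h2 : (0:ℝ) ≤ 1 - r / ‖v‖ := by
      rw [sub_nonneg, div_le_one hv]; exact h.le
    rw [h1, norm_smul, Real.norm_eq_abs, abs_of_nonneg h2]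
    rw [max_eq_left (by linarith)]
    field_simp

lemma obtuse {r : ℝ} (hr : 0 ≤ r) (v z : E) (hz : ‖z‖ ≤ r) :
    ⟪v - sProj r v, z - sProj r v⟫ ≤ 0 := by
  unfold sProj; split_ifs with h
  · simp
  · push_neg at h
    have hv : 0 < ‖v‖ := lt_of_le_of_lt hr h
    have h1 : v - (r / ‖v‖) • v = (1 - r / ‖v‖) • v := by
      rw [sub_smul, one_smul]
    have h2 : (0:ℝ) ≤ 1 - r / ‖v‖ := by
      rw [sub_nonneg, div_le_one hv]; exact h.le
    rw [h1, real_inner_smul_left, inner_sub_right, real_inner_smul_right,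
      real_inner_self_eq_norm_sq]
    have h3 : ⟪v, z⟫ ≤ ‖v‖ * r :=
      (real_inner_le_norm v z).trans (by nlinarith)
    have h4 : r / ‖v‖ * ‖v‖ ^ 2 = r * ‖v‖ := by field_simp
    nlinarith

lemma psi_upper {r : ℝ} (hr : 0 ≤ r) (v w : E) :
    max (‖w‖ - r) 0 ^ 2 ≤ max (‖v‖ - r) 0 ^ 2 + ⟪sGrad r v, w - v⟫ + ‖w - v‖ ^ 2 := by
  set p := sProj r v with hp
  have h1 : max (‖w‖ - r) 0 ≤ ‖w - p‖ := by
    apply max_le _ (norm_nonneg _)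
    calc ‖w‖ - r ≤ ‖w‖ - ‖p‖ := by linarith [norm_sProj_le hr v]
      _ ≤ ‖w - p‖ := norm_sub_norm_le _ _
  have h2 : max (‖w‖ - r) 0 ^ 2 ≤ ‖w - p‖ ^ 2 := by
    have := le_max_right (‖w‖ - r) 0
    nlinarith
  have h3 : w - p = (v - p) + (w - v) := by abel
  have h4 : ‖(v - p) + (w - v)‖ ^ 2
      = ‖v - p‖ ^ 2 + 2 * ⟪v - p, w - v⟫ + ‖w - v‖ ^ 2 := by
    rw [@norm_add_sq_real]
  have h5 : ⟪sGrad r v, w - v⟫ = 2 * ⟪v - p, w - v⟫ := by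
    rw [sGrad, real_inner_smul_left]
  rw [maxpart_eq hr v, h5]
  rw [h3, h4] at h2
  linarith

lemma psi_lower {r : ℝ} (hr : 0 ≤ r) (v w : E) :
    max (‖v‖ - r) 0 ^ 2 + ⟪sGrad r v, w - v⟫ ≤ max (‖w‖ - r) 0 ^ 2 := by
  set p := sProj r v with hp
  set q := sProj r w with hq
  set a := v - p with ha
  set b := w - q with hb
  have h5 : ⟪sGrad r v, w - v⟫ = 2 * ⟪a, w - v⟫ := by
    rw [sGrad, real_inner_smul_left]
  have hwv : w - v = b + (q - p) - a := by simp [ha, hb]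
  have h6 : ⟪a, w - v⟫ = ⟪a, b⟫ + ⟪a, q - p⟫ - ‖a‖ ^ 2 := by
    rw [hwv, inner_sub_right, inner_add_right, real_inner_self_eq_norm_sq]
  have h7 : ⟪a, q - p⟫ ≤ 0 := obtuse hr v q (norm_sProj_le hr w)
  have h8 : ‖b - a‖ ^ 2 = ‖b‖ ^ 2 - 2 * ⟪b, a⟫ + ‖a‖ ^ 2 := by
    rw [@norm_sub_sq_real]
  have h9 : ⟪a, b⟫ = ⟪b, a⟫ := real_inner_comm b a
  rw [maxpart_eq hr v, maxpart_eq hr w, h5, h6, h9]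
  nlinarith [sq_nonneg (‖b - a‖)]

lemma sGrad_lip {r : ℝ} (hr : 0 ≤ r) (v w : E) :
    ‖sGrad r w - sGrad r v‖ ≤ 2 * ‖w - v‖ := by
  set p := sProj r v with hp
  set q := sProj r w with hq
  set a := v - p with ha
  set b := w - q with hb
  have h1 : ⟪a, q - p⟫ ≤ 0 := obtuse hr v q (norm_sProj_le hr w)
  have h2 : ⟪b, p - q⟫ ≤ 0 := obtuse hr w p (norm_sProj_le hr v)
  have hwv : w - v = (b - a) + (q - p) := by simp only [ha, hb]; abel
  have h3 : ‖w - v‖ ^ 2 = ‖b - a‖ ^ 2 + 2 * ⟪b - a, q - p⟫ + ‖q - p‖ ^ 2 := by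
    rw [hwv, @norm_add_sq_real]
  have h4 : ⟪b - a, q - p⟫ = -⟪b, p - q⟫ - ⟪a, q - p⟫ := by
    simp only [inner_sub_left, inner_sub_right]; ring
  have h5 : ‖b - a‖ ^ 2 ≤ ‖w - v‖ ^ 2 := by nlinarith [sq_nonneg ‖q - p‖]
  have h6 : ‖b - a‖ ≤ ‖w - v‖ := by
    have := norm_nonneg (b - a); have := norm_nonneg (w - v); nlinarith
  have h7 : sGrad r w - sGrad r v = (2:ℝ) • (b - a) := by
    rw [sGrad, sGrad, ← smul_sub]
  rw [h7, norm_smul, Real.norm_ofNat]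
  linarith

lemma hasGradientAt_psi {r : ℝ} (hr : 0 ≤ r) (c v : E) :
    HasGradientAt (fun w => max (‖w - c‖ - r) 0 ^ 2) (sGrad r (v - c)) v := by
  rw [hasGradientAt_iff_isLittleO]
  have key : ∀ w : E, ‖max (‖w - c‖ - r) 0 ^ 2 - max (‖v - c‖ - r) 0 ^ 2
      - ⟪sGrad r (v - c), w - v⟫‖ ≤ ‖w - v‖ ^ 2 := by
    intro w
    have e : (w - c) - (v - c) = w - v := by abel
    have h1 := psi_upper hr (v - c) (w - c)
    have h2 := psi_lower hr (v - c) (w - c)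
    rw [e] at h1 h2
    rw [Real.norm_eq_abs, abs_le]
    constructor <;> nlinarith [sq_nonneg ‖w - v‖]
  rw [Asymptotics.isLittleO_iff]
  intro ε hε
  filter_upwards [Metric.ball_mem_nhds v hε] with w hw
  calc ‖max (‖w - c‖ - r) 0 ^ 2 - max (‖v - c‖ - r) 0 ^ 2 - ⟪sGrad r (v - c), w - v⟫‖
      ≤ ‖w - v‖ ^ 2 := key w
    _ = ‖w - v‖ * ‖w - v‖ := sq ‖w - v‖
    _ ≤ ε * ‖w - v‖ := by
        apply mul_le_mul_of_nonneg_right _ (norm_nonneg _)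
        rw [← dist_eq_norm]; exact (Metric.mem_ball.1 hw).le


lemma HasGradientAt.add'' {f g : E → ℝ} {f' g' : E} {x : E}
    (hf : HasGradientAt f f' x) (hg : HasGradientAt g g' x) :
    HasGradientAt (fun y => f y + g y) (f' + g') x := by
  rw [hasGradientAt_iff_isLittleO] at hf hg ⊢
  refine (hf.add hg).congr' ?_ (Eventually.of_forall fun _ => rfl)
  filter_upwards with w
  rw [inner_add_left]; ring

lemma hasGradientAt_finset_sum {ι : Type*} [DecidableEq ι] (s : Finset ι)
    (f : ι → E → ℝ) (f' : ι → E) (x : E)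
    (h : ∀ j ∈ s, HasGradientAt (f j) (f' j) x) :
    HasGradientAt (fun y => ∑ j ∈ s, f j y) (∑ j ∈ s, f' j) x := by
  induction s using Finset.induction_on with
  | empty => simpa using hasGradientAt_const x (0:ℝ)
  | @insert a s ha ih =>
      simp only [Finset.sum_insert ha]
      exact (h a (mem_insert_self a s)).add''
        (ih fun j hj => h j (mem_insert_of_mem hj))

end Helpers

theorem stmt2 (d n : ℕ) (hd : 1 ≤ d) (hn : 1 ≤ n) {J : Type*} [Fintype J]
    (a : J → EuclideanSpace ℝ (Fin d))
    (A : Fin n → Finset J) (dhat : Fin n → J → ℝ)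
    (B : Fin n → Finset (Fin n)) (lhat : Fin n → Fin n → ℝ)
    (hdhat : ∀ i, ∀ j ∈ A i, 0 ≤ dhat i j)
    (hlhat : ∀ i, ∀ q ∈ B i, 0 ≤ lhat i q)
    (hBirr : ∀ i : Fin n, i ∉ B i)
    (hBsymm : ∀ i q : Fin n, q ∈ B i ↔ i ∈ B q)
    (hlsymm : ∀ i q : Fin n, lhat i q = lhat q i) :
    ∀ (i : Fin n) (x : Fin n → EuclideanSpace ℝ (Fin d)) (y : EuclideanSpace ℝ (Fin d)),
      ‖blockGrad (obj a A dhat B lhat) i (Function.update x i y)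
          - blockGrad (obj a A dhat B lhat) i x‖
        ≤ 4 * (((A i).card : ℝ) + ((B i).card : ℝ)) * ‖y - x i‖ := by
  classical
  intro i x y
  -- representation of the block function
  have hrep : ∀ z : EuclideanSpace ℝ (Fin d),
      obj a A dhat B lhat (Function.update x i z)
      = ((∑ j ∈ A i, max (‖z - a j‖ - dhat i j) 0 ^ 2)
          + ∑ q ∈ B i, max (‖z - x q‖ - lhat i q) 0 ^ 2)
        + ((∑ i' ∈ univ \ {i}, ∑ j ∈ A i', max (‖x i' - a j‖ - dhat i' j) 0 ^ 2)
          + (1/2) * ∑ i' ∈ univ \ {i},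
              ∑ q ∈ (B i').erase i, max (‖x i' - x q‖ - lhat i' q) 0 ^ 2) := by
    intro z
    set u := Function.update x i z with hu
    have hui : u i = z := Function.update_self i z x
    have hune : ∀ i' : Fin n, i' ≠ i → u i' = x i' := fun i' h => Function.update_of_ne h z x
    have hS1 : (∑ i', ∑ j ∈ A i', max (‖u i' - a j‖ - dhat i' j) 0 ^ 2)
        = (∑ j ∈ A i, max (‖z - a j‖ - dhat i j) 0 ^ 2)
          + ∑ i' ∈ univ \ {i}, ∑ j ∈ A i', max (‖x i' - a j‖ - dhat i' j) 0 ^ 2 := by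
      rw [Finset.sum_eq_add_sum_sdiff_singleton_of_mem (mem_univ i)]
      congr 1
      · rw [hui]
      · refine Finset.sum_congr rfl fun i' hi' => ?_
        rw [hune i' (by simpa using (Finset.mem_sdiff.1 hi').2)]
    have hT : ∀ i' ∈ (univ \ {i} : Finset (Fin n)),
        (∑ q ∈ B i', max (‖u i' - u q‖ - lhat i' q) 0 ^ 2)
        = (∑ q ∈ (B i').erase i, max (‖x i' - x q‖ - lhat i' q) 0 ^ 2)
          + (if i ∈ B i' then max (‖x i' - z‖ - lhat i' i) 0 ^ 2 else 0) := by
      intro i' hi'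
      have hne : i' ≠ i := by simpa using (Finset.mem_sdiff.1 hi').2
      have hx' : u i' = x i' := hune i' hne
      have herase : ∀ q ∈ (B i').erase i,
          max (‖u i' - u q‖ - lhat i' q) 0 ^ 2 = max (‖x i' - x q‖ - lhat i' q) 0 ^ 2 := by
        intro q hq
        rw [hx', hune q (Finset.ne_of_mem_erase hq)]
      by_cases hiB : i ∈ B i'
      · rw [if_pos hiB, ← Finset.add_sum_erase _ _ hiB, Finset.sum_congr rfl herase, hx', hui]
        ring
      · rw [if_neg hiB, add_zero,
          show (B i').erase i = B i' from Finset.erase_eq_of_notMem hiB]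
        exact Finset.sum_congr rfl fun q hq => by
          rw [hx', hune q (fun h => hiB (h ▸ hq))]
    have hfilter : (univ \ {i} : Finset (Fin n)).filter (fun i' => i ∈ B i') = B i := by
      ext q
      simp only [Finset.mem_filter, Finset.mem_sdiff, Finset.mem_univ, Finset.mem_singleton,
        true_and]
      constructor
      · rintro ⟨_, hq⟩; exact (hBsymm i q).2 hq
      · intro hq
        exact ⟨fun h => hBirr i (h ▸ hq), (hBsymm i q).1 hq⟩
    have hS2 : (∑ i', ∑ q ∈ B i', max (‖u i' - u q‖ - lhat i' q) 0 ^ 2)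
        = 2 * (∑ q ∈ B i, max (‖z - x q‖ - lhat i q) 0 ^ 2)
          + ∑ i' ∈ univ \ {i}, ∑ q ∈ (B i').erase i, max (‖x i' - x q‖ - lhat i' q) 0 ^ 2 := by
      rw [Finset.sum_eq_add_sum_sdiff_singleton_of_mem (mem_univ i)]
      have h1 : (∑ q ∈ B i, max (‖u i - u q‖ - lhat i q) 0 ^ 2)
          = ∑ q ∈ B i, max (‖z - x q‖ - lhat i q) 0 ^ 2 := by
        refine Finset.sum_congr rfl fun q hq => ?_
        have hqne : q ≠ i := fun h => hBirr i (h ▸ hq)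
        rw [hui, hune q hqne]
      have h2 : (∑ i' ∈ univ \ {i}, ∑ q ∈ B i', max (‖u i' - u q‖ - lhat i' q) 0 ^ 2)
          = (∑ i' ∈ univ \ {i}, ∑ q ∈ (B i').erase i, max (‖x i' - x q‖ - lhat i' q) 0 ^ 2)
            + ∑ i' ∈ univ \ {i}, (if i ∈ B i' then max (‖x i' - z‖ - lhat i' i) 0 ^ 2 else 0) := by
        rw [← Finset.sum_add_distrib]
        exact Finset.sum_congr rfl hT
      have h3 : (∑ i' ∈ univ \ {i}, (if i ∈ B i' then max (‖x i' - z‖ - lhat i' i) 0 ^ 2 else 0))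
          = ∑ q ∈ B i, max (‖z - x q‖ - lhat i q) 0 ^ 2 := by
        rw [← Finset.sum_filter, hfilter]
        refine Finset.sum_congr rfl fun q _ => ?_
        rw [norm_sub_rev, hlsymm i q]
      rw [h1, h2, h3]
      ring
    rw [obj, hS1, hS2]
    ring
  -- gradient of the block function
  set Gr : (Fin n → EuclideanSpace ℝ (Fin d)) → EuclideanSpace ℝ (Fin d) → EuclideanSpace ℝ (Fin d) := fun x' z =>
    (∑ j ∈ A i, sGrad (dhat i j) (z - a j)) + ∑ q ∈ B i, sGrad (lhat i q) (z - x' q) with hGr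
  have hgrad : ∀ z : EuclideanSpace ℝ (Fin d),
      HasGradientAt (fun w => obj a A dhat B lhat (Function.update x i w)) (Gr x z) z := by
    intro z
    have hfun : (fun w => obj a A dhat B lhat (Function.update x i w))
        = fun w => (((∑ j ∈ A i, max (‖w - a j‖ - dhat i j) 0 ^ 2)
            + ∑ q ∈ B i, max (‖w - x q‖ - lhat i q) 0 ^ 2)
          + ((∑ i' ∈ univ \ {i}, ∑ j ∈ A i', max (‖x i' - a j‖ - dhat i' j) 0 ^ 2)
            + (1/2) * ∑ i' ∈ univ \ {i},
                ∑ q ∈ (B i').erase i, max (‖x i' - x q‖ - lhat i' q) 0 ^ 2)) := by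
      funext w; exact hrep w
    rw [hfun]
    have hA : HasGradientAt (fun w : EuclideanSpace ℝ (Fin d) => ∑ j ∈ A i, max (‖w - a j‖ - dhat i j) 0 ^ 2)
        (∑ j ∈ A i, sGrad (dhat i j) (z - a j)) z :=
      hasGradientAt_finset_sum _ _ _ _ fun j hj => hasGradientAt_psi (hdhat i j hj) (a j) z
    have hB : HasGradientAt (fun w : EuclideanSpace ℝ (Fin d) => ∑ q ∈ B i, max (‖w - x q‖ - lhat i q) 0 ^ 2)
        (∑ q ∈ B i, sGrad (lhat i q) (z - x q)) z :=
      hasGradientAt_finset_sum _ _ _ _ fun q hq => hasGradientAt_psi (hlhat i q hq) (x q) z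
    have := (hA.add'' hB).add'' (hasGradientAt_const z
      ((∑ i' ∈ univ \ {i}, ∑ j ∈ A i', max (‖x i' - a j‖ - dhat i' j) 0 ^ 2)
        + (1/2) * ∑ i' ∈ univ \ {i},
            ∑ q ∈ (B i').erase i, max (‖x i' - x q‖ - lhat i' q) 0 ^ 2))
    simpa using this
  -- compute the two blockGrads
  have hbg1 : blockGrad (obj a A dhat B lhat) i (Function.update x i y) = Gr x y := by
    rw [blockGrad]
    have : (fun z => obj a A dhat B lhat (Function.update (Function.update x i y) i z))
        = fun z => obj a A dhat B lhat (Function.update x i z) := by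
      funext z; rw [Function.update_idem]
    rw [this, Function.update_self]
    exact (hgrad y).gradient
  have hbg2 : blockGrad (obj a A dhat B lhat) i x = Gr x (x i) := by
    rw [blockGrad]
    have : (fun z => obj a A dhat B lhat (Function.update x i z))
        = fun z => obj a A dhat B lhat (Function.update x i z) := rfl
    exact (hgrad (x i)).gradient
  rw [hbg1, hbg2]
  -- final estimate
  have hdiff : Gr x y - Gr x (x i)
      = (∑ j ∈ A i, (sGrad (dhat i j) (y - a j) - sGrad (dhat i j) (x i - a j)))
        + ∑ q ∈ B i, (sGrad (lhat i q) (y - x q) - sGrad (lhat i q) (x i - x q)) := by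
    rw [hGr]
    simp only [Finset.sum_sub_distrib]
    abel
  rw [hdiff]
  have hAle : ∀ j ∈ A i, ‖sGrad (dhat i j) (y - a j) - sGrad (dhat i j) (x i - a j)‖
      ≤ 2 * ‖y - x i‖ := by
    intro j hj
    have := sGrad_lip (hdhat i j hj) (x i - a j) (y - a j)
    have he : (y - a j) - (x i - a j) = y - x i := by abel
    rwa [he] at this
  have hBle : ∀ q ∈ B i, ‖sGrad (lhat i q) (y - x q) - sGrad (lhat i q) (x i - x q)‖
      ≤ 2 * ‖y - x i‖ := by
    intro q hq
    have := sGrad_lip (hlhat i q hq) (x i - x q) (y - x q)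
    have he : (y - x q) - (x i - x q) = y - x i := by abel
    rwa [he] at this
  calc ‖(∑ j ∈ A i, (sGrad (dhat i j) (y - a j) - sGrad (dhat i j) (x i - a j)))
        + ∑ q ∈ B i, (sGrad (lhat i q) (y - x q) - sGrad (lhat i q) (x i - x q))‖
      ≤ (∑ j ∈ A i, ‖sGrad (dhat i j) (y - a j) - sGrad (dhat i j) (x i - a j)‖)
        + ∑ q ∈ B i, ‖sGrad (lhat i q) (y - x q) - sGrad (lhat i q) (x i - x q)‖ :=
        le_trans (norm_add_le _ _) (add_le_add (norm_sum_le _ _) (norm_sum_le _ _))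
    _ ≤ (∑ _j ∈ A i, 2 * ‖y - x i‖) + ∑ _q ∈ B i, 2 * ‖y - x i‖ :=
        add_le_add (Finset.sum_le_sum hAle) (Finset.sum_le_sum hBle)
    _ = 2 * (((A i).card : ℝ) + ((B i).card : ℝ)) * ‖y - x i‖ := by
        simp [Finset.sum_const, nsmul_eq_mul]; ring
    _ ≤ 4 * (((A i).card : ℝ) + ((B i).card : ℝ)) * ‖y - x i‖ := by
        have h1 : (0:ℝ) ≤ ((A i).card : ℝ) + ((B i).card : ℝ) := by positivity
        have h2 : (0:ℝ) ≤ ‖y - x i‖ := norm_nonneg _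
        nlinarith
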